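/- Assume ‖a‖² ≥ 2 and let h ∈ ℝ^L satisfy ‖h‖² > ε(h) (i.e. h lies in the good set). Then there exists a unique x > 0 such that R_h(x) = x·R'_h(x), where R'_h denotes the derivative of P ↦ R_h(P). Moreover, the function l(x) = R_h(x) − x·R'_h(x) is strictly increasing on [0,∞), satisfies l(0) = −(1/2)·log₂(‖a‖²) < 0, and is strictly positive for all x greater than this unique zero. -/

import Mathlib

open scoped BigOperators Classical
open Finset

noncomputable section

/-- Euclidean inner product on `Fin L → ℝ`. -/
def ip {L : ℕ} (x y : Fin L → ℝ) : ℝ := ∑ i, x i * y i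

/-- Squared Euclidean norm on `Fin L → ℝ`. -/
def nsq {L : ℕ} (x : Fin L → ℝ) : ℝ := ∑ i, (x i) ^ 2

/-- ε(h) = ‖h‖²‖a‖² − ⟨h,a⟩². -/
def eps {L : ℕ} (a h : Fin L → ℝ) : ℝ := nsq h * nsq a - (ip h a) ^ 2

/-- Symmetric-policy computation rate R_h(P). -/
def Rsym {L : ℕ} (a h : Fin L → ℝ) (P : ℝ) : ℝ :=
  (1 / 2) * Real.logb 2 ((1 + P * nsq h) / (nsq a + P * eps a h))

/-- The vector √p∘h with entries √(p_l)·h_l. -/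
def sqp {L : ℕ} (p h : Fin L → ℝ) : Fin L → ℝ := fun l => Real.sqrt (p l) * h l

/-- Asymmetric-policy computation rate R(h,p). -/
def Rasym {L : ℕ} (a h p : Fin L → ℝ) : ℝ :=
  (1 / 2) * Real.logb 2 ((1 + nsq (sqp p h)) /
    (nsq a + (nsq (sqp p h) * nsq a - (ip (sqp p h) a) ^ 2)))

/-- The KKT water-filling-type solution P^KKT_h(λ). -/
def PKKT {L : ℕ} (a h : Fin L → ℝ) (lam : ℝ) : ℝ :=
  if ∃ t : ℝ, h = t • a then 1 / lam - 1 / nsq h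
  else (-(2 * nsq h * nsq a - (ip h a) ^ 2) +
      Real.sqrt ((2 * nsq h * nsq a - (ip h a) ^ 2) ^ 2 -
        4 * (nsq h * eps a h) * (nsq a - (ip h a) ^ 2 / lam))) /
    (2 * (nsq h * eps a h))

lemma aux_deriv (u0 b x : ℝ) (hv : 0 < u0 + x * b) :
    HasDerivAt (fun t => Real.log (u0 + t * b) - t * b / (u0 + t * b))
      (x * b ^ 2 / (u0 + x * b) ^ 2) x := by
  have h1 : HasDerivAt (fun t : ℝ => u0 + t * b) b x := by
    simpa using ((hasDerivAt_id x).mul_const b).const_add u0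
  have h2 := h1.log hv.ne'
  have h3 : HasDerivAt (fun t : ℝ => t * b / (u0 + t * b))
      ((b * (u0 + x * b) - x * b * b) / (u0 + x * b) ^ 2) x := by
    exact (((hasDerivAt_id' x).mul_const b).div h1 hv.ne').congr_deriv (by ring)
  have h4 := h2.sub h3
  refine h4.congr_deriv ?_
  rw [div_sub_div _ _ hv.ne' (pow_ne_zero 2 hv.ne'), div_eq_div_iff (mul_ne_zero hv.ne' (pow_ne_zero 2 hv.ne')) (pow_ne_zero 2 hv.ne')]
  ring

set_option maxHeartbeats 1000000 in
/-- for ‖a‖² ≥ 2 and h in the good set, there is a unique x > 0 with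
R_h(x) = x·R'_h(x); moreover l(x) = R_h(x) − x·R'_h(x) is strictly increasing on [0,∞),
l(0) = −(1/2)log₂‖a‖² < 0, and l is strictly positive beyond the unique zero. -/
theorem stmt13 {L : ℕ} (hL : 1 ≤ L)
    (a : Fin L → ℝ) (ha : a ≠ 0) (haint : ∀ i, ∃ n : ℤ, a i = (n : ℝ))
    (ha2 : 2 ≤ nsq a)
    (h : Fin L → ℝ) (hgood : eps a h < nsq h) :
    (∃! x : ℝ, 0 < x ∧ Rsym a h x = x * deriv (Rsym a h) x) ∧
    StrictMonoOn (fun x => Rsym a h x - x * deriv (Rsym a h) x) (Set.Ici 0) ∧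
    (Rsym a h 0 - 0 * deriv (Rsym a h) 0 = -(1 / 2) * Real.logb 2 (nsq a)) ∧
    (-(1 / 2) * Real.logb 2 (nsq a) < 0) ∧
    (∀ x y : ℝ, (0 < x ∧ Rsym a h x = x * deriv (Rsym a h) x) → x < y →
      0 < Rsym a h y - y * deriv (Rsym a h) y) := by
  set N := nsq h with hNdef
  set A := nsq a with hAdef
  set E := eps a h with hEdef
  have hE0 : 0 ≤ E := by
    have := Finset.sum_mul_sq_le_sq_mul_sq Finset.univ h a
    simp only [hEdef, eps, ip, nsq]
    nlinarith [this]
  have hN : 0 < N := lt_of_le_of_lt hE0 hgood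
  have hA : 0 < A := by linarith
  have hNAE : E < N * A := lt_of_lt_of_le hgood (le_mul_of_one_le_right hN.le (by linarith))
  set c : ℝ := 1 / (2 * Real.log 2) with hcdef
  have hlog2 : 0 < Real.log 2 := Real.log_pos one_lt_two
  have hc : 0 < c := by positivity
  set U : Set ℝ := {x : ℝ | 0 < 1 + x * N ∧ 0 < A + x * E} with hUdef
  have hUopen : IsOpen U := by
    refine IsOpen.and ?_ ?_
    · exact isOpen_lt continuous_const (by fun_prop)
    · exact isOpen_lt continuous_const (by fun_prop)
  have hIciU : Set.Ici (0:ℝ) ⊆ U := by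
    intro x hx
    simp only [Set.mem_Ici] at hx
    constructor <;> [nlinarith; nlinarith]
  have hRsymEq : ∀ x ∈ U, Rsym a h x
      = (Real.log (1 + x * N) - Real.log (A + x * E)) * c := by
    intro x hx
    have hu := hx.1
    have hv := hx.2
    rw [Rsym, Real.logb, Real.log_div hu.ne' hv.ne']
    rw [hcdef]
    field_simp
  have hDeriv : ∀ x ∈ U, HasDerivAt (Rsym a h)
      ((N / (1 + x * N) - E / (A + x * E)) * c) x := by
    intro x hx
    have h1 : HasDerivAt (fun t : ℝ => 1 + t * N) N x := by
      simpa using ((hasDerivAt_id x).mul_const N).const_add 1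
    have h2 : HasDerivAt (fun t : ℝ => A + t * E) E x := by
      simpa using ((hasDerivAt_id x).mul_const E).const_add A
    have hF : HasDerivAt (fun t : ℝ => (Real.log (1 + t * N) - Real.log (A + t * E)) * c)
        ((N / (1 + x * N) - E / (A + x * E)) * c) x :=
      ((h1.log hx.1.ne').sub (h2.log hx.2.ne')).mul_const c
    exact hF.congr_of_eventuallyEq
      (Filter.eventuallyEq_of_mem (hUopen.mem_nhds hx) (fun y hy => hRsymEq y hy))
  have hderivEq : ∀ x ∈ U, deriv (Rsym a h) x
      = (N / (1 + x * N) - E / (A + x * E)) * c := fun x hx => (hDeriv x hx).deriv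
  set lg : ℝ → ℝ := fun x =>
    ((Real.log (1 + x * N) - x * N / (1 + x * N))
      - (Real.log (A + x * E) - x * E / (A + x * E))) * c with hlgdef
  have hlEq : ∀ x ∈ U, Rsym a h x - x * deriv (Rsym a h) x = lg x := by
    intro x hx
    rw [hderivEq x hx, hRsymEq x hx, hlgdef]
    ring
  have hlgDeriv : ∀ x ∈ U, HasDerivAt lg
      ((x * N ^ 2 / (1 + x * N) ^ 2 - x * E ^ 2 / (A + x * E) ^ 2) * c) x := by
    intro x hx
    exact ((aux_deriv 1 N x hx.1).sub (aux_deriv A E x hx.2)).mul_const c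
  have hlgdpos : ∀ x : ℝ, 0 < x →
      0 < (x * N ^ 2 / (1 + x * N) ^ 2 - x * E ^ 2 / (A + x * E) ^ 2) * c := by
    intro x hx
    have hmem := hIciU (Set.mem_Ici.2 hx.le)
    have hu := hmem.1
    have hv := hmem.2
    have key : E ^ 2 / (A + x * E) ^ 2 < N ^ 2 / (1 + x * N) ^ 2 := by
      rw [div_lt_div_iff₀ (by positivity) (by positivity)]
      have h1 : E * (1 + x * N) < N * (A + x * E) := by nlinarith
      have h2 : 0 ≤ E * (1 + x * N) := mul_nonneg hE0 hu.le
      nlinarith [mul_self_lt_mul_self h2 h1]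
    have hpos : 0 < x * N ^ 2 / (1 + x * N) ^ 2 - x * E ^ 2 / (A + x * E) ^ 2 := by
      have heq : x * N ^ 2 / (1 + x * N) ^ 2 - x * E ^ 2 / (A + x * E) ^ 2
          = x * (N ^ 2 / (1 + x * N) ^ 2 - E ^ 2 / (A + x * E) ^ 2) := by ring
      rw [heq]
      exact mul_pos hx (by linarith)
    exact mul_pos hpos hc
  have hmono : StrictMonoOn lg (Set.Ici 0) := by
    apply strictMonoOn_of_deriv_pos (convex_Ici 0)
    · exact fun x hx => ((hlgDeriv x (hIciU hx)).continuousAt).continuousWithinAt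
    · intro x hx
      rw [interior_Ici] at hx
      rw [(hlgDeriv x (hIciU (Set.mem_Ici.2 (le_of_lt hx)))).deriv]
      exact hlgdpos x hx
  -- value at 0
  have hval0 : Rsym a h 0 - 0 * deriv (Rsym a h) 0 = -(1 / 2) * Real.logb 2 A := by
    have h0 : Rsym a h 0 = (1 / 2) * Real.logb 2 (1 / A) := by
      rw [Rsym]; norm_num; rfl
    have hinv : Real.logb 2 (1 / A) = -Real.logb 2 A := by
      rw [one_div, Real.logb_inv]
    rw [h0, hinv]; ring
  have hlogA : 0 < Real.logb 2 A := Real.logb_pos one_lt_two (by linarith)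
  have hneg : -(1 / 2) * Real.logb 2 A < 0 := by linarith
  have hlg0 : lg 0 < 0 := by
    have heq := hlEq 0 (hIciU (Set.mem_Ici.2 le_rfl))
    rw [hval0] at heq
    linarith
  -- existence of a point where lg is positive
  have hx1 : ∃ x1 : ℝ, 0 < x1 ∧ 0 < lg x1 := by
    rcases eq_or_lt_of_le hE0 with hE | hE
    · -- E = 0
      have hE' : E = 0 := hE.symm
      set x1 := Real.exp (1 + Real.log A) / N with hx1def
      have hx1pos : 0 < x1 := by positivity
      refine ⟨x1, hx1pos, ?_⟩
      have hxN : x1 * N = Real.exp (1 + Real.log A) := div_mul_cancel₀ _ hN.ne'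
      have hu : (0:ℝ) < 1 + x1 * N := by
        rw [hxN]; positivity
      have hlog : 1 + Real.log A < Real.log (1 + x1 * N) := by
        rw [hxN]
        calc 1 + Real.log A = Real.log (Real.exp (1 + Real.log A)) := (Real.log_exp _).symm
        _ < Real.log (1 + Real.exp (1 + Real.log A)) :=
            Real.log_lt_log (Real.exp_pos _) (by linarith)
      have hfrac : x1 * N / (1 + x1 * N) < 1 := by
        rw [div_lt_one hu]; linarith [Real.exp_pos (1 + Real.log A), hxN]
      have hexp : lg x1 = ((Real.log (1 + x1 * N) - x1 * N / (1 + x1 * N))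
          - Real.log A) * c := by
        rw [hlgdef]; simp [hE']
      rw [hexp]
      exact mul_pos (by linarith) hc
    · -- 0 < E
      have tu : Filter.Tendsto (fun x : ℝ => 1 + x * N) Filter.atTop Filter.atTop :=
        Filter.tendsto_atTop_add_const_left _ 1
          (Filter.Tendsto.atTop_mul_const hN Filter.tendsto_id)
      have tv : Filter.Tendsto (fun x : ℝ => A + x * E) Filter.atTop Filter.atTop :=
        Filter.tendsto_atTop_add_const_left _ A
          (Filter.Tendsto.atTop_mul_const hE Filter.tendsto_id)
      have t1 : Filter.Tendsto (fun x : ℝ => x * N / (1 + x * N)) Filter.atTop (nhds 1) := by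
        have base : Filter.Tendsto (fun x : ℝ => 1 - (1 + x * N)⁻¹) Filter.atTop
            (nhds (1 - 0)) := Filter.Tendsto.const_sub 1 tu.inv_tendsto_atTop
        rw [sub_zero] at base
        refine base.congr' ?_
        filter_upwards [Filter.eventually_ge_atTop (0:ℝ)] with x hx
        have hu : (0:ℝ) < 1 + x * N := by nlinarith
        field_simp
        ring
      have t2 : Filter.Tendsto (fun x : ℝ => x * E / (A + x * E)) Filter.atTop (nhds 1) := by
        have base : Filter.Tendsto (fun x : ℝ => 1 - A * (A + x * E)⁻¹) Filter.atTop
            (nhds (1 - A * 0)) :=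
          Filter.Tendsto.const_sub 1 (Filter.Tendsto.const_mul A tv.inv_tendsto_atTop)
        rw [mul_zero, sub_zero] at base
        refine base.congr' ?_
        filter_upwards [Filter.eventually_ge_atTop (0:ℝ)] with x hx
        have hv : (0:ℝ) < A + x * E := by nlinarith
        field_simp
        ring
      have tr : Filter.Tendsto (fun x : ℝ => (1 + x * N) / (A + x * E)) Filter.atTop
          (nhds (N / E)) := by
        have ta : Filter.Tendsto (fun x : ℝ => x⁻¹ + N) Filter.atTop (nhds (0 + N)) :=
          Filter.Tendsto.add_const N tendsto_inv_atTop_zero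
        have tb : Filter.Tendsto (fun x : ℝ => A * x⁻¹ + E) Filter.atTop (nhds (A * 0 + E)) :=
          Filter.Tendsto.add_const E (Filter.Tendsto.const_mul A tendsto_inv_atTop_zero)
        have hEne : A * 0 + E ≠ 0 := by simpa using hE.ne'
        have base := ta.div tb hEne
        have hval : (0 + N) / (A * 0 + E) = N / E := by norm_num
        rw [hval] at base
        refine base.congr' ?_
        filter_upwards [Filter.eventually_gt_atTop (0:ℝ)] with x hx
        have hv : (0:ℝ) < A + x * E := by nlinarith
        have hb : (0:ℝ) < A * x⁻¹ + E := by positivity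
        simp only [Pi.div_apply]
        rw [div_eq_div_iff hb.ne' hv.ne']
        field_simp
      have t3 : Filter.Tendsto (fun x : ℝ => Real.log (1 + x * N) - Real.log (A + x * E))
          Filter.atTop (nhds (Real.log (N / E))) := by
        have hcont : ContinuousAt Real.log (N / E) :=
          Real.continuousAt_log (div_pos hN hE).ne'
        have base := hcont.tendsto.comp tr
        refine base.congr' ?_
        filter_upwards [Filter.eventually_ge_atTop (0:ℝ)] with x hx
        have hu : (0:ℝ) < 1 + x * N := by nlinarith
        have hv : (0:ℝ) < A + x * E := by nlinarith
        simp only [Function.comp_apply]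
        rw [Real.log_div hu.ne' hv.ne']
      have total : Filter.Tendsto lg Filter.atTop
          (nhds ((Real.log (N / E) - 1 + 1) * c)) := by
        have base := ((t3.sub t1).add t2).mul_const c
        refine base.congr (fun x => ?_)
        rw [hlgdef]
        ring
      have hpos : 0 < (Real.log (N / E) - 1 + 1) * c := by
        have : 0 < Real.log (N / E) :=
          Real.log_pos ((one_lt_div hE).2 hgood)
        have h' : Real.log (N / E) - 1 + 1 = Real.log (N / E) := by ring
        rw [h']
        exact mul_pos this hc
      have hev : ∀ᶠ x in Filter.atTop, 0 < lg x :=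
        total.eventually (eventually_gt_nhds hpos)
      obtain ⟨x1, hx1a, hx1b⟩ := (hev.and (Filter.eventually_gt_atTop 0)).exists
      exact ⟨x1, hx1b, hx1a⟩
  obtain ⟨x1, hx1pos, hlgx1⟩ := hx1
  have hcont : ContinuousOn lg (Set.Icc 0 x1) := fun x hx =>
    ((hlgDeriv x (hIciU hx.1)).continuousAt).continuousWithinAt
  have hmem0 : (0:ℝ) ∈ Set.Icc (lg 0) (lg x1) := ⟨hlg0.le, hlgx1.le⟩
  obtain ⟨x0, hx0mem, hx0eq⟩ := intermediate_value_Icc hx1pos.le hcont hmem0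
  have hx0pos : 0 < x0 := by
    rcases lt_or_eq_of_le hx0mem.1 with h' | h'
    · exact h'
    · exfalso; rw [← h'] at hx0eq; linarith
  have hzero : ∀ z : ℝ, 0 ≤ z →
      (Rsym a h z = z * deriv (Rsym a h) z ↔ lg z = 0) := by
    intro z hz
    rw [← sub_eq_zero, hlEq z (hIciU hz)]
  refine ⟨⟨x0, ⟨hx0pos, ?_⟩, ?_⟩, ?_, ?_, ?_, ?_⟩
  · exact (hzero x0 hx0pos.le).2 hx0eq
  · rintro y ⟨hy, hyeq⟩
    have hy0 : lg y = 0 := (hzero y hy.le).1 hyeq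
    exact hmono.injOn (Set.mem_Ici.2 hy.le) (Set.mem_Ici.2 hx0pos.le)
      (by rw [hy0, hx0eq])
  · intro u hu v hv huv
    show Rsym a h u - u * deriv (Rsym a h) u < Rsym a h v - v * deriv (Rsym a h) v
    rw [hlEq u (hIciU hu), hlEq v (hIciU hv)]
    exact hmono hu hv huv
  · exact hval0
  · exact hneg
  · rintro u v ⟨hu, hueq⟩ huv
    have h1 : lg u = 0 := (hzero u hu.le).1 hueq
    have hv0 : (0:ℝ) ≤ v := by linarith
    have h2 := hmono (Set.mem_Ici.2 hu.le) (Set.mem_Ici.2 hv0) huv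
    rw [hlEq v (hIciU hv0)]
    rw [h1] at h2
    exact h2
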